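/- Let (X, ◁) be a finite quandle with |X| > 1 whose structure group G(X,◁) is nilpotent and not isomorphic to ℤ. Then the associated solution (X, r_◁) with r_◁(x,y) = (y, x ◁ y) is decomposable. -/

import Mathlib

open Function

section Defs

variable {X Y : Type*}

/-- `r₁₂ = r × id` on `X³`. -/
def r12 (r : X × X → X × X) : X × X × X → X × X × X :=
  fun p => ((r (p.1, p.2.1)).1, (r (p.1, p.2.1)).2, p.2.2)

/-- `r₂₃ = id × r` on `X³`. -/
def r23 (r : X × X → X × X) : X × X × X → X × X × X :=
  fun p => (p.1, r p.2)

/-- The Yang--Baxter (braid) equation. -/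
def IsYB (r : X × X → X × X) : Prop :=
  (r12 r) ∘ (r23 r) ∘ (r12 r) = (r23 r) ∘ (r12 r) ∘ (r23 r)

/-- The solution map `r(x,y) = (λ_x(y), ρ_y(x))` built from `λ` and `ρ`. -/
def rMap (lam : X → Equiv.Perm X) (rho : X → X → X) : X × X → X × X :=
  fun p => (lam p.1 p.2, rho p.2 p.1)

/-- `(X, r)` with `r(x,y) = (λ_x(y), ρ_y(x))` is a bijective non-degenerate
set-theoretic solution of the Yang--Baxter equation. -/
def IsSolution (lam : X → Equiv.Perm X) (rho : X → X → X) : Prop :=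
  IsYB (rMap lam rho) ∧ Bijective (rMap lam rho) ∧ ∀ y, Bijective (rho y)

/-- The (left) derived operation `σ_y(x) = x ◁ y = λ_y(ρ_{λ_x⁻¹(y)}(x))`. -/
def sigMap (lam : X → Equiv.Perm X) (rho : X → X → X) (y : X) : X → X :=
  fun x => lam y (rho ((lam x).symm y) x)

/-- A biquandle: a solution whose derived rack is a quandle. -/
def IsBiquandle (lam : X → Equiv.Perm X) (rho : X → X → X) : Prop :=
  IsSolution lam rho ∧ ∀ x, sigMap lam rho x x = x

/-- The diagonal map `q(x) = λ_x⁻¹(x)`. -/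
def qMap (lam : X → Equiv.Perm X) : X → X := fun x => (lam x).symm x

/-- `λ` of the `k`-th additive multiple: `λ_{kx}` restricted to `X`,
computed via `kx = x ∘ q(x) ∘ ⋯ ∘ q^{k-1}(x)` and `λ_{a∘b} = λ_a λ_b`. -/
def lamCab (lam : X → Equiv.Perm X) : ℕ → X → Equiv.Perm X
  | 0, _ => 1
  | k+1, x => lam x * lamCab lam k (qMap lam x)

/-- `σ` of the `k`-th additive multiple: `σ_{ky} = σ_y^k` restricted to `X`. -/
def sigCab (lam : X → Equiv.Perm X) (rho : X → X → X) (k : ℕ) (y : X) : X → X :=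
  (sigMap lam rho y)^[k]

/-- `ρ` of the `k`-cabled solution, via `ρ_b(a) = λ_{λ_a(b)}⁻¹ σ_{λ_a(b)}(a)`. -/
def rhoCab (lam : X → Equiv.Perm X) (rho : X → X → X) (k : ℕ) (y x : X) : X :=
  (lamCab lam k (lamCab lam k x y)).symm (sigCab lam rho k (lamCab lam k x y) x)

/-- The `k`-cabled solution `r^{(k)}`. -/
def rCab (lam : X → Equiv.Perm X) (rho : X → X → X) (k : ℕ) : X × X → X × X :=
  rMap (lamCab lam k) (rhoCab lam rho k)

/-- `f` is a morphism of solutions `(X,r) → (Y,s)`. -/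
def IsMor (r : X × X → X × X) (s : Y × Y → Y × Y) (f : X → Y) : Prop :=
  ∀ p, Prod.map f f (r p) = s (Prod.map f f p)

/-- `(X,r)` is `n`-decomposable: a partition into `n` nonempty subsolutions
`X_1, …, X_n` with `r(X_i × X_j) = X_j × X_i`. -/
def NDecomp (r : X × X → X × X) (n : ℕ) : Prop :=
  ∃ P : Fin n → Set X, (∀ i, (P i).Nonempty) ∧
    (∀ i j, i ≠ j → Disjoint (P i) (P j)) ∧ (⋃ i, P i) = Set.univ ∧
    ∀ i j, r '' ((P i) ×ˢ (P j)) = (P j) ×ˢ (P i)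

/-- `(X,r)` is decomposable: a partition `X = Y ⊔ Z` into nonempty parts with
`r(Y×Y) ⊆ Y×Y` and `r(Z×Z) ⊆ Z×Z`. -/
def Decomposable (r : X × X → X × X) : Prop :=
  ∃ A B : Set X, A.Nonempty ∧ B.Nonempty ∧ Disjoint A B ∧ A ∪ B = Set.univ ∧
    r '' (A ×ˢ A) ⊆ A ×ˢ A ∧ r '' (B ×ˢ B) ⊆ B ×ˢ B

/-- A solution is simple if every epimorphic image is isomorphic to it or a singleton. -/
def SimpleSol {X : Type u} (r : X × X → X × X) : Prop :=
  ∀ (Z : Type u) (s : Z × Z → Z × Z) (f : X → Z),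
    Surjective f → IsMor r s f → Bijective f ∨ Subsingleton Z

/-- The image in `Perm X` of the group `S(X,r) = ⟨σ_x⁻¹ : x ∈ X⟩ ⋊ 𝒢(X,r)`
acting on `X` via `(σ_a⁻¹, λ_b, ρ_b⁻¹) · x = σ_a⁻¹ λ_b (x)`:
the subgroup of `Perm X` generated by all `σ_x` and `λ_x`. -/
def permGroupOf (lam : X → Equiv.Perm X) (rho : X → X → X) : Subgroup (Equiv.Perm X) :=
  Subgroup.closure {g : Equiv.Perm X | (∃ y, ⇑g = sigMap lam rho y) ∨ ∃ y, g = lam y}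

/-- Relations `x ∘ y = l(x,y) ∘ ρ(y,x)` defining a structure group. -/
def relsOf (l ρ : X → X → X) : Set (FreeGroup X) :=
  {w | ∃ x y : X, w = FreeGroup.of x * FreeGroup.of y *
      (FreeGroup.of (l x y) * FreeGroup.of (ρ y x))⁻¹}

end Defs

open Subgroup Pointwise
open scoped commutatorElement

private lemma comm_center_left {G : Type*} [Group G] {z : G}
    (hz : z ∈ Subgroup.center G) (a b : G) : ⁅a * z, b⁆ = ⁅a, b⁆ := by
  have hzc : ∀ c : G, z * c * z⁻¹ = c := fun c => by
    rw [← Subgroup.mem_center_iff.mp hz c]; group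
  simp only [commutatorElement_def]
  calc a * z * b * (a * z)⁻¹ * b⁻¹ = a * (z * b * z⁻¹) * a⁻¹ * b⁻¹ := by group
  _ = a * b * a⁻¹ * b⁻¹ := by rw [hzc]

private lemma comm_center_both {G : Type*} [Group G] {z w : G}
    (hz : z ∈ Subgroup.center G) (hw : w ∈ Subgroup.center G) (a b : G) :
    ⁅a * z, b * w⁆ = ⁅a, b⁆ := by
  rw [comm_center_left hz]
  rw [← commutatorElement_inv, comm_center_left hw, commutatorElement_inv]

private lemma nilpotent_sup_commutator_eq_top {G : Type*} [Group G] [Group.IsNilpotent G] :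
    ∀ K : Subgroup G, K ⊔ commutator G = ⊤ → K = ⊤ := by
  refine nilpotent_center_quotient_ind
    (P := fun G _ _ => ∀ K : Subgroup G, K ⊔ commutator G = ⊤ → K = ⊤) G ?_ ?_
  · intro G _ _
    intro K _
    rw [Subgroup.eq_top_iff']
    intro x
    rw [Subsingleton.elim x 1]
    exact one_mem K
  · intro G _ _ ih
    intro K hK
    set Z := Subgroup.center G with hZ
    set π := QuotientGroup.mk' Z with hπ
    have hsurj : Function.Surjective π := QuotientGroup.mk'_surjective Z
    have hmap : Subgroup.map π K ⊔ commutator (G ⧸ Z) = ⊤ := by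
      have h2 := congrArg (Subgroup.map π) hK
      rwa [Subgroup.map_sup, commutator_def, Subgroup.map_commutator,
        Subgroup.map_top_of_surjective _ hsurj, ← commutator_def] at h2
    have hKtop := ih _ hmap
    have hKZ : K ⊔ Z = ⊤ := by
      have h3 := congrArg (Subgroup.comap π) hKtop
      rwa [Subgroup.comap_map_eq, QuotientGroup.ker_mk', Subgroup.comap_top] at h3
    have hcle : commutator G ≤ K := by
      rw [commutator_def, Subgroup.commutator_le]
      intro g₁ _ g₂ _
      have h₁ : g₁ ∈ ((K : Set G) * (Z : Set G)) := by
        rw [← Subgroup.mul_normal K Z, hKZ]; trivial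
      have h₂ : g₂ ∈ ((K : Set G) * (Z : Set G)) := by
        rw [← Subgroup.mul_normal K Z, hKZ]; trivial
      obtain ⟨k₁, hk₁, z₁, hz₁, rfl⟩ := h₁
      obtain ⟨k₂, hk₂, z₂, hz₂, rfl⟩ := h₂
      rw [comm_center_both hz₁ hz₂]
      rw [commutatorElement_def]
      exact mul_mem (mul_mem (mul_mem hk₁ hk₂) (inv_mem hk₁)) (inv_mem hk₂)
    rw [← hK, sup_eq_left.mpr hcle]


/-- a finite quandle with more than one element whose structure group is
nilpotent and not isomorphic to `ℤ` has a decomposable associated solution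
`r_◁(x,y) = (y, x ◁ y)`. -/
theorem quandle_nilpotent_decomposable {X : Type*} [Finite X]
    (op : X → X → X)
    (hbij : ∀ y, Function.Bijective (fun x => op x y))
    (hsd : ∀ x y z, op (op x y) z = op (op x z) (op y z))
    (hq : ∀ x, op x x = x)
    (hcard : 1 < Nat.card X)
    (hnilp : Group.IsNilpotent
      (PresentedGroup (relsOf (fun _ y => y) (fun y x => op x y) : Set (FreeGroup X))))
    (hnotZ : IsEmpty
      ((PresentedGroup (relsOf (fun _ y => y) (fun y x => op x y) : Set (FreeGroup X)))
        ≃* Multiplicative ℤ)) :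
    Decomposable (fun p : X × X => (p.2, op p.1 p.2)) := by
  classical
  haveI : Nontrivial X := Finite.one_lt_card_iff_nontrivial.mp hcard
  set rels : Set (FreeGroup X) :=
    (relsOf (fun _ y => y) (fun y x => op x y) : Set (FreeGroup X)) with hrels
  set G := PresentedGroup rels with hG
  set e : X → G := PresentedGroup.of with he
  -- the defining relations in the structure group
  have hrel : ∀ x y : X, e x * e y = e y * e (op x y) := by
    intro x y
    have hw : (FreeGroup.of x * FreeGroup.of y *
        (FreeGroup.of y * FreeGroup.of (op x y))⁻¹ : FreeGroup X) ∈ rels := ⟨x, y, rfl⟩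
    have h1 : (QuotientGroup.mk (FreeGroup.of x * FreeGroup.of y *
        (FreeGroup.of y * FreeGroup.of (op x y))⁻¹) : G) = 1 :=
      (QuotientGroup.eq_one_iff _).mpr (Subgroup.subset_normalClosure hw)
    have h2 : e x * e y * (e y * e (op x y))⁻¹ = 1 := h1
    exact mul_inv_eq_one.mp h2
  -- the permutations σ_y and the group they generate
  set σ : X → Equiv.Perm X := fun y => Equiv.ofBijective _ (hbij y) with hσ
  have hσapp : ∀ y x, σ y x = op x y := by
    intro y x
    rw [hσ]
    rfl
  set S : Subgroup (Equiv.Perm X) := Subgroup.closure (Set.range σ) with hS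
  obtain ⟨x₀⟩ : Nonempty X := inferInstance
  set A : Set X := {x | ∃ g ∈ S, g x₀ = x} with hA
  have hx₀A : x₀ ∈ A := ⟨1, one_mem S, rfl⟩
  have hAfwd : ∀ y, ∀ x ∈ A, op x y ∈ A := by
    intro y x ⟨g, hg, hgx⟩
    exact ⟨σ y * g, mul_mem (Subgroup.subset_closure ⟨y, rfl⟩) hg, by
      rw [Equiv.Perm.mul_apply, hgx, hσapp]⟩
  have hAbwd : ∀ y, ∀ x, op x y ∈ A → x ∈ A := by
    intro y x ⟨g, hg, hgx⟩
    refine ⟨(σ y)⁻¹ * g, mul_mem (inv_mem (Subgroup.subset_closure ⟨y, rfl⟩)) hg, ?_⟩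
    have : (σ y)⁻¹ (op x y) = x := by
      rw [← hσapp y x]
      exact (σ y).symm_apply_apply x
    simp [Equiv.Perm.mul_apply, hgx, this]
  by_cases hAuniv : A = Set.univ
  · -- connected case: derive a contradiction
    exfalso
    -- all generators are conjugate
    have hconjS : ∀ g ∈ S, ∀ x : X, IsConj (e x) (e (g x)) := by
      intro g hg
      induction hg using Subgroup.closure_induction with
      | mem g hgmem =>
        obtain ⟨y, rfl⟩ := hgmem
        intro x
        refine isConj_iff.mpr ⟨(e y)⁻¹, ?_⟩
        rw [hσapp]
        calc (e y)⁻¹ * e x * ((e y)⁻¹)⁻¹ = (e y)⁻¹ * (e x * e y) := by group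
        _ = (e y)⁻¹ * (e y * e (op x y)) := by rw [hrel]
        _ = e (op x y) := by group
      | one =>
        intro x
        have h1 : ((1 : Equiv.Perm X)) x = x := rfl
        rw [h1]
      | mul g h _ _ pg ph =>
        intro x
        have h1 := ph x
        have h2 := pg (h x)
        simpa [Equiv.Perm.mul_apply] using h1.trans h2
      | inv g _ pg =>
        intro x
        have h1 := pg (g⁻¹ x)
        rw [show g (g⁻¹ x) = x from g.apply_symm_apply x] at h1
        exact h1.symm
    have hconj : ∀ x : X, IsConj (e x₀) (e x) := by
      intro x
      have hx : x ∈ A := hAuniv ▸ Set.mem_univ x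
      obtain ⟨g, hg, rfl⟩ := hx
      exact hconjS g hg x₀
    haveI : Group.IsNilpotent G := hnilp
    set K : Subgroup G := Subgroup.zpowers (e x₀) with hK
    have hKsup : K ⊔ commutator G = ⊤ := by
      rw [eq_top_iff, ← PresentedGroup.closure_range_of rels]
      rw [Subgroup.closure_le]
      rintro _ ⟨x, rfl⟩
      obtain ⟨c, hc⟩ := isConj_iff.mp (hconj x)
      have hex : e x = e x₀ * ⁅(e x₀)⁻¹, c⁆ := by
        rw [← hc, commutatorElement_def]; group
      have hex' : (PresentedGroup.of x : G) = e x₀ * ⁅(e x₀)⁻¹, c⁆ := hex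
      rw [hex']
      exact mul_mem
        (Subgroup.mem_sup_left (Subgroup.mem_zpowers _))
        (Subgroup.mem_sup_right (Subgroup.commutator_mem_commutator
          (Subgroup.mem_top _) (Subgroup.mem_top _)))
    have hKtop : K = ⊤ := nilpotent_sup_commutator_eq_top K hKsup
    -- the degree homomorphism to ℤ
    have hlift : ∀ r ∈ rels, FreeGroup.lift
        (fun _ : X => Multiplicative.ofAdd (1 : ℤ)) r = 1 := by
      rintro r ⟨x, y, rfl⟩
      simp only [map_mul, map_inv, FreeGroup.lift_apply_of]
      group
    set φ : G →* Multiplicative ℤ := PresentedGroup.toGroup hlift with hφ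
    have hφof : ∀ x : X, φ (e x) = Multiplicative.ofAdd (1 : ℤ) :=
      fun x => PresentedGroup.toGroup.of hlift
    have hφpow : ∀ n : ℤ, φ (e x₀ ^ n) = Multiplicative.ofAdd n := by
      intro n
      rw [map_zpow, hφof]
      rw [← ofAdd_zsmul]
      norm_num
    have hbijφ : Function.Bijective φ := by
      constructor
      · rw [injective_iff_map_eq_one]
        intro g hg1
        have hgK : g ∈ K := hKtop.symm ▸ Subgroup.mem_top g
        obtain ⟨n, hn⟩ := Subgroup.mem_zpowers_iff.mp hgK
        rw [← hn] at hg1 ⊢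
        rw [hφpow] at hg1
        have hn0 : n = 0 := by
          have := congrArg Multiplicative.toAdd hg1
          simpa using this
        rw [hn0, zpow_zero]
      · intro m
        exact ⟨e x₀ ^ (Multiplicative.toAdd m), by rw [hφpow]; rfl⟩
    exact hnotZ.false (MulEquiv.ofBijective φ hbijφ)
  · -- decomposable case
    refine ⟨A, Aᶜ, ⟨x₀, hx₀A⟩, Set.nonempty_compl.mpr hAuniv,
      disjoint_compl_right, Set.union_compl_self A, ?_, ?_⟩
    · rintro ⟨u, v⟩ ⟨⟨x, y⟩, ⟨hx, hy⟩, heq⟩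
      obtain ⟨rfl, rfl⟩ := Prod.mk.injEq .. ▸ heq
      exact ⟨hy, hAfwd y x hx⟩
    · rintro ⟨u, v⟩ ⟨⟨x, y⟩, ⟨hx, hy⟩, heq⟩
      obtain ⟨rfl, rfl⟩ := Prod.mk.injEq .. ▸ heq
      exact ⟨hy, fun hmem => hx (hAbwd y x hmem)⟩
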